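/- Let κ > 1 and define the sequence λ_{k+1} = (1 - λ_k²/κ + √((1 - λ_k²/κ)² + 4λ_k²))/2 with λ_1 ∈ (1, √κ]. Then λ_k ≤ √κ for all k ≥ 1. -/

import Mathlib

theorem lambda_le_sqrt_kappa (κ : ℝ) (hκ : 1 < κ) (lam : ℕ → ℝ)
    (hinit : 1 < lam 1 ∧ lam 1 ≤ Real.sqrt κ)
    (hrec : ∀ k ≥ 1, lam (k + 1) =
      (1 - (lam k) ^ 2 / κ + Real.sqrt ((1 - (lam k) ^ 2 / κ) ^ 2 + 4 * (lam k) ^ 2)) / 2) :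
    ∀ k ≥ 1, lam k ≤ Real.sqrt κ := by
  have hκ0 : (0:ℝ) < κ := by linarith
  set s := Real.sqrt κ with hsdef
  have hs2 : s ^ 2 = κ := Real.sq_sqrt (le_of_lt hκ0)
  have hs1 : 1 < s := by
    nlinarith [Real.sqrt_nonneg κ]
  have key : ∀ k ≥ 1, 0 ≤ lam k ∧ lam k ≤ s := by
    intro k hk
    induction k with
    | zero => omega
    | succ n ih =>
      rcases Nat.lt_or_ge n 1 with h1 | hn
      · interval_cases n
        exact ⟨le_of_lt (lt_trans one_pos hinit.1), hinit.2⟩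
      · obtain ⟨h0, hle⟩ := ih hn
        have hl2 : (lam n) ^ 2 ≤ κ := by nlinarith
        rw [hrec n hn]
        set a : ℝ := 1 - (lam n) ^ 2 / κ with hadef
        clear_value a
        have ha : a * κ = κ - (lam n) ^ 2 := by
          rw [hadef, sub_mul, one_mul, div_mul_cancel₀ _ (ne_of_gt hκ0)]
        have ha1 : a ≤ 1 := by
          have : 0 ≤ (lam n) ^ 2 / κ := div_nonneg (sq_nonneg _) (le_of_lt hκ0)
          linarith
        have hkey : a ^ 2 + 4 * (lam n) ^ 2 ≤ (2 * s - a) ^ 2 := by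
          nlinarith [mul_nonneg (by linarith : (0:ℝ) ≤ s - 1)
            (by linarith : (0:ℝ) ≤ κ - (lam n) ^ 2), hs2, ha, sq_nonneg (lam n)]
        have hsq : Real.sqrt (a ^ 2 + 4 * (lam n) ^ 2) ≤ 2 * s - a := by
          have h2sa : 0 ≤ 2 * s - a := by linarith
          calc Real.sqrt (a ^ 2 + 4 * (lam n) ^ 2) ≤ Real.sqrt ((2 * s - a) ^ 2) :=
                Real.sqrt_le_sqrt hkey
            _ = 2 * s - a := Real.sqrt_sq h2sa
        have hlow : -a ≤ Real.sqrt (a ^ 2 + 4 * (lam n) ^ 2) := by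
          have h := Real.sqrt_le_sqrt (show a ^ 2 ≤ a ^ 2 + 4 * (lam n) ^ 2 by nlinarith)
          rw [Real.sqrt_sq_eq_abs] at h
          linarith [neg_abs_le a]
        constructor
        · linarith
        · linarith
  intro k hk
  exact (key k hk).2
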